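/- Let k be an algebraically closed field, r ≥ 1, and β : {1,…,r} → {0,1} a block function with s_j = #{i : β(i) = j}. If M ∈ GL_r(k) is a brick for the nodal matrix problem, then the submatrix of M with rows {i : β(i) = 0} and columns {j : β(j) = 1} has maximal rank, i.e. rank equal to min(s₀, s₁). -/

import Mathlib

theorem aux_ker {k : Type*} [Field k] {m n : Type*} [Fintype m] [Fintype n]
    (A : Matrix m n k) (h : A.rank < Fintype.card n) :
    ∃ v : n → k, v ≠ 0 ∧ A.mulVec v = 0 := by
  have h2 := LinearMap.finrank_range_add_finrank_ker A.mulVecLin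
  rw [Module.finrank_pi] at h2
  have hk : LinearMap.ker A.mulVecLin ≠ ⊥ := by
    intro hbot
    rw [hbot, finrank_bot] at h2
    have : A.rank = Module.finrank k (LinearMap.range A.mulVecLin) := rfl
    omega
  obtain ⟨v, hv, hv0⟩ := (Submodule.ne_bot_iff _).mp hk
  exact ⟨v, hv0, hv⟩

theorem aux_fin2 (x : Fin 2) : x = 0 ∨ x = 1 := by fin_cases x <;> simp



/-- A pair `(S, S')` of `r × r` matrices is admissible for the nodal matrix problem. -/
def NodalAdmissiblePair {k : Type*} [Field k] {r : ℕ} (β : Fin r → Fin 2)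
    (S S' : Matrix (Fin r) (Fin r) k) : Prop :=
  (∀ i j, β i < β j → S i j = 0 ∧ S' i j = 0) ∧
  (∀ i j, β i = β j → S i j = S' i j)

/-- A brick for the nodal matrix problem. -/
def NodalBrick {k : Type*} [Field k] {r : ℕ} (β : Fin r → Fin 2)
    (M : Matrix (Fin r) (Fin r) k) : Prop :=
  IsUnit M ∧
    ∀ S S' : Matrix (Fin r) (Fin r) k, NodalAdmissiblePair β S S' → S * M = M * S' →
      ∃ c : k, S = c • (1 : Matrix (Fin r) (Fin r) k) ∧
        S' = c • (1 : Matrix (Fin r) (Fin r) k)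

/-- For a brick of the nodal matrix problem, the block with rows in block 0 and
columns in block 1 has maximal rank `min(s₀, s₁)` (Proposition 6.3 of the paper). -/
theorem nodal_brick_block_maximal_rank (k : Type*) [Field k] [IsAlgClosed k]
    (r : ℕ) (hr : 1 ≤ r) (β : Fin r → Fin 2)
    (M : Matrix (Fin r) (Fin r) k) (hM : NodalBrick β M) :
    (Matrix.of fun (i : {i : Fin r // β i = 0}) (j : {j : Fin r // β j = 1}) =>
        M i.1 j.1).rank =
      min (Fintype.card {i : Fin r // β i = 0}) (Fintype.card {j : Fin r // β j = 1}) := by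
  set A : Matrix {i : Fin r // β i = 0} {j : Fin r // β j = 1} k :=
    Matrix.of fun i j => M i.1 j.1 with hA
  refine le_antisymm (le_min A.rank_le_card_height A.rank_le_card_width) ?_
  by_contra hlt
  push_neg at hlt
  rw [lt_min_iff] at hlt
  obtain ⟨h0, h1⟩ := hlt
  obtain ⟨v, hv0, hAv⟩ := aux_ker A h1
  obtain ⟨w, hw0, hAw⟩ := aux_ker A.transpose (by rw [Matrix.rank_transpose]; exact h0)
  set vt : Fin r → k := fun j => if h : β j = 1 then v ⟨j, h⟩ else 0 with hvt
  set wt : Fin r → k := fun i => if h : β i = 0 then w ⟨i, h⟩ else 0 with hwt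
  set a : Fin r → k := M.mulVec vt with ha
  set b : Fin r → k := Matrix.vecMul wt M with hb
  have hvt0 : ∀ i, β i = 0 → vt i = 0 := by
    intro i hi
    have : ¬ (β i = 1) := by rw [hi]; decide
    simp [hvt, this]
  have hwt1 : ∀ j, β j = 1 → wt j = 0 := by
    intro j hj
    have : ¬ (β j = 0) := by rw [hj]; decide
    simp [hwt, this]
  have ha0 : ∀ i, β i = 0 → a i = 0 := by
    intro i hi
    have key : a i = ∑ j : {j : Fin r // β j = 1}, M i j.1 * v j := by
      calc a i = ∑ j : Fin r, M i j * vt j := rfl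
        _ = ∑ j ∈ Finset.univ.filter (fun j => β j = 1), M i j * vt j := by
            refine (Finset.sum_filter_of_ne ?_).symm
            intro x _ hx
            by_contra h
            rw [hvt] at hx
            simp [h] at hx
        _ = ∑ j : {j : Fin r // β j = 1}, M i j.1 * vt j.1 :=
            Finset.sum_subtype _ (by simp) _
        _ = ∑ j : {j : Fin r // β j = 1}, M i j.1 * v j := by
            apply Finset.sum_congr rfl
            intro j _
            rw [hvt]
            simp [j.2]
    rw [key]
    have := congrFun hAv ⟨i, hi⟩
    simpa [Matrix.mulVec, dotProduct, hA] using this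
  have hb1 : ∀ j, β j = 1 → b j = 0 := by
    intro j hj
    have key : b j = ∑ i : {i : Fin r // β i = 0}, wt i.1 * M i.1 j := by
      calc b j = ∑ i : Fin r, wt i * M i j := rfl
        _ = ∑ i ∈ Finset.univ.filter (fun i => β i = 0), wt i * M i j := by
            refine (Finset.sum_filter_of_ne ?_).symm
            intro x _ hx
            by_contra h
            rw [hwt] at hx
            simp [h] at hx
        _ = ∑ i : {i : Fin r // β i = 0}, wt i.1 * M i.1 j :=
            Finset.sum_subtype _ (by simp) _
    rw [key]
    have := congrFun hAw ⟨j, hj⟩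
    simp only [Matrix.mulVec, dotProduct, Matrix.transpose_apply, hA,
      Matrix.of_apply, Pi.zero_apply] at this
    rw [← this]
    apply Finset.sum_congr rfl
    intro i _
    rw [hwt]
    simp [i.2, mul_comm]
  set S : Matrix (Fin r) (Fin r) k := Matrix.of fun i j => a i * wt j with hS
  set S' : Matrix (Fin r) (Fin r) k := Matrix.of fun i j => vt i * b j with hS'
  have hadm : NodalAdmissiblePair β S S' := by
    constructor
    · intro i j hij
      rcases aux_fin2 (β i) with hi | hi
      · exact ⟨by simp [hS, ha0 i hi], by simp [hS', hvt0 i hi]⟩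
      · rcases aux_fin2 (β j) with hj | hj <;> rw [hi, hj] at hij <;>
          exact absurd hij (by decide)
    · intro i j hij
      rcases aux_fin2 (β i) with hi | hi
      · simp [hS, hS', ha0 i hi, hvt0 i hi]
      · have hj : β j = 1 := hij ▸ hi
        simp [hS, hS', hwt1 j hj, hb1 j hj]
  have hcomm : S * M = M * S' := by
    ext i j
    simp only [Matrix.mul_apply, hS, hS', Matrix.of_apply]
    calc ∑ l, a i * wt l * M l j = a i * ∑ l, wt l * M l j := by
          rw [Finset.mul_sum]; apply Finset.sum_congr rfl; intros; ring
      _ = a i * b j := rfl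
      _ = (∑ l, M i l * vt l) * b j := rfl
      _ = ∑ l, M i l * (vt l * b j) := by
          rw [Finset.sum_mul]; apply Finset.sum_congr rfl; intros; ring
  obtain ⟨c, hSc, hS'c⟩ := hM.2 S S' hadm hcomm
  have hcard0 : 0 < Fintype.card {i : Fin r // β i = 0} := lt_of_le_of_lt (Nat.zero_le _) h0
  obtain ⟨i0⟩ := Fintype.card_pos_iff.mp hcard0
  have hc : c = 0 := by
    have e := congrFun (congrFun hSc i0.1) i0.1
    simp [hS, ha0 i0.1 i0.2, Matrix.one_apply] at e
    exact e.symm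
  rw [hc, zero_smul] at hSc
  obtain ⟨j0, hj0⟩ := Function.ne_iff.mp hw0
  have hwtj0 : wt j0.1 ≠ 0 := by
    rw [hwt]
    simpa [j0.2] using hj0
  have haz : ∀ i, a i = 0 := by
    intro i
    have e := congrFun (congrFun hSc i) j0.1
    simp only [hS, Matrix.of_apply, Matrix.zero_apply] at e
    rcases mul_eq_zero.mp e with h | h
    · exact h
    · exact absurd h hwtj0
  have hvtz : vt = 0 := by
    have hinj : Function.Injective M.mulVec := Matrix.mulVec_injective_iff_isUnit.mpr hM.1
    apply hinj
    rw [Matrix.mulVec_zero]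
    funext i
    exact haz i
  obtain ⟨j1, hj1⟩ := Function.ne_iff.mp hv0
  apply hj1
  have e := congrFun hvtz j1.1
  rw [hvt] at e
  simpa [j1.2] using e
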